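/- For every positive integer n, the ratio B_{2n}(t)/B_{2n-1}(t) is strictly increasing in t on (0, 1/2) and strictly increasing on (1/2, 1). -/

import Mathlib

open Set Real Filter

noncomputable def B (n : ℕ) (t : ℝ) : ℝ := Polynomial.aeval t (Polynomial.bernoulli n)

noncomputable def Bnum (n : ℕ) : ℝ := ((bernoulli n : ℚ) : ℝ)

lemma B_eq_bernoulliFun (n : ℕ) : B n = bernoulliFun n := by
  funext t
  rw [B, bernoulliFun, Polynomial.aeval_def, Polynomial.eval_map]

lemma hasDerivAt_B (n : ℕ) (t : ℝ) : HasDerivAt (B n) (n * B (n-1) t) t := by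
  simpa [B_eq_bernoulliFun] using hasDerivAt_bernoulliFun n t

lemma B_continuous (n : ℕ) : Continuous (B n) := by
  rw [B_eq_bernoulliFun]; exact Polynomial.continuous _

lemma B_zero_eval (n : ℕ) : B n 0 = ((bernoulli n : ℚ) : ℝ) := by
  rw [B_eq_bernoulliFun]; exact bernoulliFun_eval_zero n

lemma B_zero (t : ℝ) : B 0 t = 1 := by
  rw [B, Polynomial.bernoulli_zero]; simp

lemma funeq {f g f' : ℝ → ℝ} (hf : ∀ t, HasDerivAt f (f' t) t)
    (hg : ∀ t, HasDerivAt g (f' t) t) (h0 : f 0 = g 0) : ∀ t, f t = g t := by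
  intro t
  have hdiff : Differentiable ℝ (fun t => f t - g t) :=
    fun x => ((hf x).sub (hg x)).differentiableAt
  have hz : ∀ x, deriv (fun t => f t - g t) x = 0 := by
    intro x
    exact ((hf x).sub (hg x)).deriv.trans (sub_self _)
  have h := is_const_of_deriv_eq_zero hdiff hz t 0
  linarith [h, h0]

lemma B_one (t : ℝ) : B 1 t = t - 1/2 := by
  refine funeq (f := B 1) (g := fun x => x - 1/2) (f' := fun _ => 1) (fun x => ?_) (fun x => ?_) ?_ t
  · simpa [B_zero] using hasDerivAt_B 1 x
  · simpa using (hasDerivAt_id x).sub_const (1/2 : ℝ)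
  · rw [B_zero_eval, bernoulli_one]; norm_num

lemma B_two (t : ℝ) : B 2 t = t^2 - t + 1/6 := by
  refine funeq (f := B 2) (g := fun x => x^2 - x + 1/6) (f' := fun x => 2*(x - 1/2)) (fun x => ?_) (fun x => ?_) ?_ t
  · have := hasDerivAt_B 2 x
    simp only [show (2:ℕ)-1 = 1 from rfl, B_one] at this
    convert this using 1 <;> (push_cast; try ring)
  · have h : HasDerivAt (fun x : ℝ => x^2 - x + 1/6) _ x :=
      ((hasDerivAt_pow 2 x).sub (hasDerivAt_id x)).add_const (1/6:ℝ)
    convert h using 1 <;> push_cast <;> try ring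
  · rw [B_zero_eval, bernoulli_eq_bernoulli'_of_ne_one (by norm_num), bernoulli'_two]
    norm_num

lemma B_three (t : ℝ) : B 3 t = t^3 - (3/2)*t^2 + (1/2)*t := by
  refine funeq (f := B 3) (g := fun x => x^3 - (3/2)*x^2 + (1/2)*x) (f' := fun x => 3*(x^2 - x + 1/6)) (fun x => ?_) (fun x => ?_) ?_ t
  · have := hasDerivAt_B 3 x
    simp only [show (3:ℕ)-1 = 2 from rfl, B_two] at this
    convert this using 1 <;> (push_cast; try ring)
  · have h : HasDerivAt (fun x : ℝ => x^3 - (3/2)*x^2 + (1/2)*x) _ x :=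
      ((hasDerivAt_pow 3 x).sub ((hasDerivAt_pow 2 x).const_mul (3/2:ℝ))).add
      ((hasDerivAt_id x).const_mul (1/2:ℝ))
    convert h using 1 <;> push_cast <;> try ring
  · rw [B_zero_eval, bernoulli_eq_bernoulli'_of_ne_one (by norm_num), bernoulli'_three]
    norm_num

lemma B_four (t : ℝ) : B 4 t = t^4 - 2*t^3 + t^2 - 1/30 := by
  refine funeq (f := B 4) (g := fun x => x^4 - 2*x^3 + x^2 - 1/30) (f' := fun x => 4*(x^3 - (3/2)*x^2 + (1/2)*x)) (fun x => ?_) (fun x => ?_) ?_ t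
  · have := hasDerivAt_B 4 x
    simp only [show (4:ℕ)-1 = 3 from rfl, B_three] at this
    convert this using 1 <;> (push_cast; try ring)
  · have h : HasDerivAt (fun x : ℝ => x^4 - 2*x^3 + x^2 - 1/30) _ x :=
      (((hasDerivAt_pow 4 x).sub ((hasDerivAt_pow 3 x).const_mul (2:ℝ))).add
      (hasDerivAt_pow 2 x)).sub_const (1/30:ℝ)
    convert h using 1 <;> push_cast <;> try ring
  · rw [B_zero_eval, bernoulli_eq_bernoulli'_of_ne_one (by norm_num), bernoulli'_four]
    norm_num

lemma B_symm : ∀ (n : ℕ) (t : ℝ), B n (1 - t) = (-1)^n * B n t := by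
  intro n
  induction n with
  | zero => intro t; simp [B_zero]
  | succ n ih =>
    intro t
    have hsq : ((-1:ℝ)^(n+1)) * ((-1:ℝ)^(n+1)) = 1 := by
      rw [← pow_add, show n+1+(n+1) = 2*(n+1) from by ring, pow_mul]; norm_num
    have hf : ∀ x : ℝ, HasDerivAt (fun t : ℝ => (-1)^(n+1) * B (n+1) (1-t))
        (((n+1:ℕ):ℝ) * B n x) x := by
      intro x
      have hin : HasDerivAt (fun t : ℝ => 1 - t) (-1) x := (hasDerivAt_id x).const_sub 1
      have h1 := (hasDerivAt_B (n+1) (1-x)).comp x hin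
      have h2 : HasDerivAt (fun t : ℝ => (-1)^(n+1) * B (n+1) (1-t)) _ x :=
        h1.const_mul ((-1:ℝ)^(n+1))
      convert h2 using 1
      simp only [Nat.add_sub_cancel]
      rw [ih x]
      have : (-1:ℝ)^(n+1) * ((-1:ℝ)^n * (-1)) = 1 := by
        rw [show (-1:ℝ)^(n+1) * ((-1:ℝ)^n * (-1)) = (-1:ℝ)^(n+1) * (-1:ℝ)^(n+1) from by
          rw [pow_succ]]
        exact hsq
      linear_combination (-(((n+1:ℕ):ℝ) * B n x)) * this
    have hg : ∀ x : ℝ, HasDerivAt (B (n+1)) (((n+1:ℕ):ℝ) * B n x) x := by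
      intro x
      have := hasDerivAt_B (n+1) x
      simpa [Nat.add_sub_cancel] using this
    have h0 : (-1:ℝ)^(n+1) * B (n+1) (1-0) = B (n+1) 0 := by
      rcases Nat.eq_zero_or_pos n with hn | hn
      · subst hn
        norm_num [B_one]
      · have hend : B (n+1) 1 = B (n+1) 0 := by
          rw [B_eq_bernoulliFun]
          exact bernoulliFun_endpoints_eq_of_ne_one (by omega)
        rcases Nat.even_or_odd (n+1) with he | ho
        · rw [sub_zero, hend, he.neg_one_pow, one_mul]
        · have hz : B (n+1) 0 = 0 := by
            rw [B_zero_eval, bernoulli_eq_bernoulli'_of_ne_one (by omega),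
              bernoulli'_eq_zero_of_odd ho (by omega)]
            simp
          rw [sub_zero, hend, hz, mul_zero]
    have key := funeq hf hg h0 t
    calc B (n+1) (1-t) = ((-1:ℝ)^(n+1) * (-1:ℝ)^(n+1)) * B (n+1) (1-t) := by rw [hsq, one_mul]
      _ = (-1:ℝ)^(n+1) * ((-1:ℝ)^(n+1) * B (n+1) (1-t)) := by ring
      _ = (-1:ℝ)^(n+1) * B (n+1) t := by rw [key]

lemma B_odd_half (n : ℕ) : B (2*n+1) (1/2) = 0 := by
  have h := B_symm (2*n+1) (1/2)
  rw [show (1:ℝ) - 1/2 = 1/2 from by norm_num] at h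
  have hodd : (-1:ℝ)^(2*n+1) = -1 := Odd.neg_one_pow ⟨n, by ring⟩
  rw [hodd] at h
  linarith

lemma B_odd_zero (n : ℕ) (hn : 1 ≤ n) : B (2*n+1) 0 = 0 := by
  rw [B_zero_eval, bernoulli_eq_bernoulli'_of_ne_one (by omega),
    bernoulli'_eq_zero_of_odd ⟨n, by ring⟩ (by omega)]
  simp

lemma B_odd_sign : ∀ (k : ℕ), ∀ t ∈ Ioo (0:ℝ) (1/2), 0 < (-1)^(k+1) * B (2*k+1) t := by
  intro k
  induction k with
  | zero =>
    intro t ht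
    have h2 := ht.2
    norm_num [B_one]
    linarith
  | succ k ih =>
    intro t ht
    have hd1 : ∀ x : ℝ, HasDerivAt (fun x => (-1:ℝ)^(k+1) * B (2*k+3) x)
        ((-1:ℝ)^(k+1) * (((2*k+3:ℕ):ℝ) * B (2*k+2) x)) x := by
      intro x
      have := (hasDerivAt_B (2*k+3) x).const_mul ((-1:ℝ)^(k+1))
      simpa [show 2*k+3-1 = 2*k+2 from by omega] using this
    have hderiv : deriv (fun x => (-1:ℝ)^(k+1) * B (2*k+3) x)
        = fun x => (-1:ℝ)^(k+1) * (((2*k+3:ℕ):ℝ) * B (2*k+2) x) :=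
      funext fun x => (hd1 x).deriv
    have hd2 : ∀ x : ℝ, HasDerivAt (deriv (fun x => (-1:ℝ)^(k+1) * B (2*k+3) x))
        ((-1:ℝ)^(k+1) * (((2*k+3:ℕ):ℝ) * (((2*k+2:ℕ):ℝ) * B (2*k+1) x))) x := by
      intro x
      rw [hderiv]
      have := ((hasDerivAt_B (2*k+2) x).const_mul (((2*k+3:ℕ):ℝ))).const_mul ((-1:ℝ)^(k+1))
      simpa [show 2*k+2-1 = 2*k+1 from by omega] using this
    have hcvx : StrictConvexOn ℝ (Icc (0:ℝ) (1/2)) (fun x => (-1:ℝ)^(k+1) * B (2*k+3) x) := by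
      apply strictConvexOn_of_deriv2_pos (convex_Icc _ _)
      · exact (continuous_const.mul (B_continuous (2*k+3))).continuousOn
      · intro x hx
        rw [interior_Icc] at hx
        have hit : deriv^[2] (fun x => (-1:ℝ)^(k+1) * B (2*k+3) x)
            = deriv (deriv (fun x => (-1:ℝ)^(k+1) * B (2*k+3) x)) := by
          simp [Function.iterate_succ, Function.iterate_zero, Function.comp]
        rw [hit, (hd2 x).deriv]
        have hpos := ih x hx
        have c3 : (0:ℝ) < ((2*k+3:ℕ):ℝ) := by positivity
        have c2 : (0:ℝ) < ((2*k+2:ℕ):ℝ) := by positivity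
        have := mul_pos (mul_pos c3 c2) hpos
        linarith
    have h0 : (fun x => (-1:ℝ)^(k+1) * B (2*k+3) x) 0 = 0 := by
      simp only
      rw [show 2*k+3 = 2*(k+1)+1 from by ring, B_odd_zero (k+1) (by omega), mul_zero]
    have h12 : (fun x => (-1:ℝ)^(k+1) * B (2*k+3) x) (1/2:ℝ) = 0 := by
      simp only
      rw [show 2*k+3 = 2*(k+1)+1 from by ring, B_odd_half (k+1), mul_zero]
    obtain ⟨ht0, ht2⟩ := ht
    have key := hcvx.2 (show (0:ℝ) ∈ Icc (0:ℝ) (1/2) from by norm_num)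
      (show (1/2:ℝ) ∈ Icc (0:ℝ) (1/2) from by norm_num)
      (show (0:ℝ) ≠ 1/2 from by norm_num)
      (show (0:ℝ) < 1 - 2*t from by linarith) (show (0:ℝ) < 2*t from by linarith)
      (show (1 - 2*t) + 2*t = 1 from by ring)
    rw [h0, h12] at key
    simp only [smul_eq_mul] at key
    rw [show (1 - 2*t) * 0 + (2*t) * (1/2:ℝ) = t from by ring] at key
    -- key : (-1)^(k+1) * B (2*k+3) t < (1-2t)*0 + 2t*0
    have hkey : (-1:ℝ)^(k+1) * B (2*k+3) t < 0 := by linarith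
    have : (-1:ℝ)^(k+1+1) * B (2*(k+1)+1) t = -((-1:ℝ)^(k+1) * B (2*k+3) t) := by
      rw [show 2*(k+1)+1 = 2*k+3 from by ring, pow_succ]; ring
    rw [this]
    linarith

lemma tail_bound {m : ℕ} (hm : 4 ≤ m) (g : ℕ → ℝ) (hg : ∀ k, |g k| ≤ 1) {L : ℝ}
    (h : HasSum (fun k : ℕ => 1/(k:ℝ)^m * g k) L) : |L - g 1| ≤ 1/8 := by
  have hrange : ∑ i ∈ Finset.range 2, (1/((i:ℕ):ℝ)^m * g i) = g 1 := by
    rw [Finset.sum_range_succ, Finset.sum_range_one]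
    norm_num [zero_pow (show m ≠ 0 by omega)]
  have htail : HasSum (fun k : ℕ => 1/(((k+2:ℕ)):ℝ)^m * g (k+2)) (L - g 1) := by
    rw [← hrange]
    exact (hasSum_nat_add_iff' 2).mpr h
  have hsum2 : ∑ i ∈ Finset.range 2, 1/((i:ℕ):ℝ)^4 = 1 := by
    rw [Finset.sum_range_succ, Finset.sum_range_one]
    norm_num
  have hz : HasSum (fun n : ℕ => 1/((n:ℝ)+2)^4) (π^4/90 - 1) := by
    have h4 := (hasSum_nat_add_iff' (f := fun n : ℕ => 1/((n:ℕ):ℝ)^4) 2).mpr hasSum_zeta_four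
    rw [hsum2] at h4
    have hfun : (fun n : ℕ => 1/((n:ℝ)+2)^4) = (fun n : ℕ => 1/(((n+2:ℕ)):ℝ)^4) := by
      funext n; push_cast; ring
    rw [hfun]
    exact h4
  have hcomp : ∀ k : ℕ, |1/(((k+2:ℕ)):ℝ)^m * g (k+2)| ≤ 1/((k:ℝ)+2)^4 := by
    intro k
    have hb : (1:ℝ) ≤ (k:ℝ)+2 := by
      have := Nat.cast_nonneg (α := ℝ) k
      linarith
    have hcast : (((k+2:ℕ)):ℝ) = (k:ℝ)+2 := by push_cast; ring
    rw [hcast]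
    calc |1/((k:ℝ)+2)^m * g (k+2)| = |1/((k:ℝ)+2)^m| * |g (k+2)| := abs_mul _ _
      _ ≤ |1/((k:ℝ)+2)^m| * 1 := mul_le_mul_of_nonneg_left (hg _) (abs_nonneg _)
      _ = 1/((k:ℝ)+2)^m := by rw [mul_one, abs_of_nonneg (by positivity)]
      _ ≤ 1/((k:ℝ)+2)^4 := one_div_le_one_div_of_le (by positivity)
          (pow_le_pow_right₀ hb hm)
  have habs : Summable (fun k : ℕ => |1/(((k+2:ℕ)):ℝ)^m * g (k+2)|) :=
    Summable.of_nonneg_of_le (fun k => abs_nonneg _) hcomp hz.summable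
  have hnorm : Summable (fun k : ℕ => ‖1/(((k+2:ℕ)):ℝ)^m * g (k+2)‖) := habs
  have h5 := norm_tsum_le_tsum_norm hnorm
  simp only [Real.norm_eq_abs] at h5
  rw [← htail.tsum_eq]
  calc |∑' k : ℕ, 1/(((k+2:ℕ)):ℝ)^m * g (k+2)|
      ≤ ∑' k : ℕ, |1/(((k+2:ℕ)):ℝ)^m * g (k+2)| := h5
    _ ≤ ∑' k : ℕ, 1/((k:ℝ)+2)^4 := habs.tsum_le_tsum hcomp hz.summable
    _ = π^4/90 - 1 := hz.tsum_eq
    _ ≤ 1/8 := by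
        have hπ : π ≤ 3.15 := Real.pi_lt_d2.le
        have h4 : π^4 ≤ 3.15^4 := pow_le_pow_left₀ Real.pi_pos.le hπ 4
        norm_num at h4 ⊢
        linarith

lemma est {S C C0 s c : ℝ} (h1 : |S - s| ≤ 1/8) (h2 : |C - c| ≤ 1/8) (h3 : |C0 - c| ≤ 1/8)
    (hsc : s^2 + c^2 = 1) (hs1 : |s| ≤ 1) (hc1 : |c| ≤ 1) : 0 < S^2 + C*C0 := by
  rw [abs_le] at h1 h2 h3 hs1 hc1
  nlinarith [sq_nonneg (S-s), mul_self_nonneg (C-c), mul_self_nonneg (C0-c),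
    h1.1, h1.2, h2.1, h2.2, h3.1, h3.2, hs1.1, hs1.2, hc1.1, hc1.2, hsc]

lemma wronskian_pos (k : ℕ) {t : ℝ} (ht : t ∈ Ioo (0:ℝ) 1) :
    0 < (2*(k:ℝ)+2) * (B (2*k+1) t)^2 - (2*(k:ℝ)+1) * B (2*k+2) t * B (2*k) t := by
  rcases k with _ | k
  · norm_num [B_one, B_two, B_zero]
    nlinarith [sq_nonneg (t - 1/2)]
  rcases k with _ | m
  · norm_num [B_three, B_four, B_two]
    nlinarith [mul_nonneg (sq_nonneg (t - 1/2)) (sq_nonneg ((t - 1/2)^2 - 1/8)),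
      sq_nonneg (t - 1/2), sq_nonneg ((t-1/2)^2 - 1/8)]
  · -- k = m + 2
    have hidx1 : 2*(m+1+1)+1 = 2*m+5 := by ring
    have hidx2 : 2*(m+1+1)+2 = 2*m+6 := by ring
    have hidx0 : 2*(m+1+1) = 2*m+4 := by ring
    rw [hidx1, hidx2, hidx0]
    have ht' : t ∈ Icc (0:ℝ) 1 := Ioo_subset_Icc_self ht
    have eB : ∀ nn : ℕ, (Polynomial.map (algebraMap ℚ ℝ) (Polynomial.bernoulli nn)).eval t
        = B nn t := by
      intro nn; rw [B_eq_bernoulliFun]; rfl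
    have hS := hasSum_one_div_nat_pow_mul_sin (k := m+2) (by omega) ht'
    have hC := hasSum_one_div_nat_pow_mul_cos (k := m+3) (by omega) ht'
    have hC0 := hasSum_one_div_nat_pow_mul_cos (k := m+2) (by omega) ht'
    rw [show 2*(m+2)+1 = 2*m+5 from by ring, eB] at hS
    rw [show 2*(m+3) = 2*m+6 from by ring, eB] at hC
    rw [show 2*(m+2) = 2*m+4 from by ring, eB] at hC0
    have hSb := tail_bound (show 4 ≤ 2*m+5 by omega)
      (fun j : ℕ => Real.sin (2*π*(j:ℝ)*t)) (fun j => Real.abs_sin_le_one _) hS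
    have hCb := tail_bound (show 4 ≤ 2*m+6 by omega)
      (fun j : ℕ => Real.cos (2*π*(j:ℝ)*t)) (fun j => Real.abs_cos_le_one _) hC
    have hC0b := tail_bound (show 4 ≤ 2*m+4 by omega)
      (fun j : ℕ => Real.cos (2*π*(j:ℝ)*t)) (fun j => Real.abs_cos_le_one _) hC0
    have hE := est hSb hCb hC0b (Real.sin_sq_add_cos_sq (2*π*((1:ℕ):ℝ)*t))
      (Real.abs_sin_le_one _) (Real.abs_cos_le_one _)
    -- algebraic identity
    have ha0 : (0:ℝ) < ((2*m+4).factorial : ℝ) := by exact_mod_cast Nat.factorial_pos _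
    have ha1 : (0:ℝ) < ((2*m+5).factorial : ℝ) := by exact_mod_cast Nat.factorial_pos _
    have ha2 : (0:ℝ) < ((2*m+6).factorial : ℝ) := by exact_mod_cast Nat.factorial_pos _
    have hc5 : (0:ℝ) < ((2*m+5:ℕ):ℝ) := by positivity
    have hc6 : (0:ℝ) < ((2*m+6:ℕ):ℝ) := by positivity
    have f1 : ((2*m+6).factorial : ℝ) = ((2*m+6:ℕ):ℝ) * ((2*m+5).factorial : ℝ) := by
      rw [show 2*m+6 = (2*m+5)+1 from by ring, Nat.factorial_succ]
      push_cast; ring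
    have f2 : ((2*m+5).factorial : ℝ) = ((2*m+5:ℕ):ℝ) * ((2*m+4).factorial : ℝ) := by
      rw [show 2*m+5 = (2*m+4)+1 from by ring, Nat.factorial_succ]
      push_cast; ring
    have key : ((-1:ℝ)^(m+2+1) * (2*π)^(2*m+5) / 2 / ((2*m+5).factorial : ℝ) * B (2*m+5) t)^2
        + ((-1:ℝ)^(m+3+1) * (2*π)^(2*m+6) / 2 / ((2*m+6).factorial : ℝ) * B (2*m+6) t)
          * ((-1:ℝ)^(m+2+1) * (2*π)^(2*m+4) / 2 / ((2*m+4).factorial : ℝ) * B (2*m+4) t)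
        = (2*π)^(4*m+10) / (4 * ((2*m+6).factorial : ℝ) * ((2*m+4).factorial : ℝ)
            * ((2*m+5:ℕ):ℝ))
          * (((2*m+6:ℕ):ℝ) * (B (2*m+5) t)^2
              - ((2*m+5:ℕ):ℝ) * B (2*m+6) t * B (2*m+4) t) := by
      rw [show m+2+1 = m+3 from rfl, show m+3+1 = m+4 from rfl]
      have hπ : (2*π) ≠ 0 := by positivity
      rcases Nat.even_or_odd (m+3) with hpar | hpar
      · have hq3 : (-1:ℝ)^(m+3) = 1 := hpar.neg_one_pow
        have hq4 : (-1:ℝ)^(m+4) = -1 := by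
          rw [show m+4 = (m+3)+1 from rfl]
          exact (hpar.add_one).neg_one_pow
        rw [hq3, hq4, f1, f2]
        field_simp
        ring
      · have hq3 : (-1:ℝ)^(m+3) = -1 := hpar.neg_one_pow
        have hq4 : (-1:ℝ)^(m+4) = 1 := by
          rw [show m+4 = (m+3)+1 from rfl]
          exact (hpar.add_one).neg_one_pow
        rw [hq3, hq4, f1, f2]
        field_simp
        ring
    rw [key] at hE
    have hcoef : (0:ℝ) < (2*π)^(4*m+10) / (4 * ((2*m+6).factorial : ℝ)
        * ((2*m+4).factorial : ℝ) * ((2*m+5:ℕ):ℝ)) := by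
      apply div_pos (by positivity)
      positivity
    have hω : 0 < ((2*m+6:ℕ):ℝ) * (B (2*m+5) t)^2
        - ((2*m+5:ℕ):ℝ) * B (2*m+6) t * B (2*m+4) t := by
      by_contra hcon
      push_neg at hcon
      nlinarith [mul_nonpos_of_nonneg_of_nonpos hcoef.le hcon]
    push_cast at hω ⊢
    linarith

lemma hasDerivAt_ratio (k : ℕ) (x : ℝ) (hx : B (2*k+1) x ≠ 0) :
    HasDerivAt (fun t => B (2*k+2) t / B (2*k+1) t)
      ((((2*k+2:ℕ):ℝ) * B (2*k+1) x * B (2*k+1) x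
        - B (2*k+2) x * (((2*k+1:ℕ):ℝ) * B (2*k) x)) / (B (2*k+1) x)^2) x := by
  have h1 := hasDerivAt_B (2*k+2) x
  have h2 := hasDerivAt_B (2*k+1) x
  rw [show 2*k+2-1 = 2*k+1 from by omega] at h1
  rw [show 2*k+1-1 = 2*k from by omega] at h2
  exact h1.div h2 hx

lemma mono_on (k : ℕ) (s : Set ℝ) (hs : Convex ℝ s) (hsub : s ⊆ Ioo (0:ℝ) 1)
    (hopen : IsOpen s) (hne : ∀ x ∈ s, B (2*k+1) x ≠ 0) :
    StrictMonoOn (fun t : ℝ => B (2*k+2) t / B (2*k+1) t) s := by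
  apply strictMonoOn_of_deriv_pos hs
  · exact ContinuousOn.div (B_continuous _).continuousOn (B_continuous _).continuousOn hne
  · intro x hx
    rw [hopen.interior_eq] at hx
    have hne' := hne x hx
    rw [(hasDerivAt_ratio k x hne').deriv]
    apply div_pos
    · have hw := wronskian_pos k (hsub hx)
      push_cast
      nlinarith [hw]
    · exact pow_two_pos_of_ne_zero hne'

theorem stmt7 (n : ℕ) (hn : 1 ≤ n) :
    StrictMonoOn (fun t : ℝ => B (2*n) t / B (2*n-1) t) (Ioo (0:ℝ) (1/2)) ∧
    StrictMonoOn (fun t : ℝ => B (2*n) t / B (2*n-1) t) (Ioo (1/2:ℝ) 1) := by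
  obtain ⟨k, rfl⟩ : ∃ k, n = k + 1 := ⟨n - 1, by omega⟩
  simp only [show 2*(k+1) = 2*k+2 from by ring]
  simp only [show 2*k+2-1 = 2*k+1 from by omega]
  have hne1 : ∀ x ∈ Ioo (0:ℝ) (1/2), B (2*k+1) x ≠ 0 := by
    intro x hx h0
    have := B_odd_sign k x hx
    rw [h0, mul_zero] at this
    exact lt_irrefl 0 this
  have hne2 : ∀ x ∈ Ioo (1/2:ℝ) 1, B (2*k+1) x ≠ 0 := by
    intro x hx h0
    have h1x : 1 - x ∈ Ioo (0:ℝ) (1/2) := ⟨by linarith [hx.2], by linarith [hx.1]⟩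
    have hsign := B_odd_sign k (1-x) h1x
    rw [B_symm (2*k+1) x, h0, mul_zero, mul_zero] at hsign
    exact lt_irrefl 0 hsign
  constructor
  · exact mono_on k _ (convex_Ioo _ _)
      (fun x hx => ⟨hx.1, by linarith [hx.2]⟩) isOpen_Ioo hne1
  · exact mono_on k _ (convex_Ioo _ _)
      (fun x hx => ⟨by linarith [hx.1], hx.2⟩) isOpen_Ioo hne2
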